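/- In the free unital associative ring ℤ⟨X⟩, for every permutation σ of {1,2,3,4,5} and all elements a₁,...,a₅, one has [a₁,a₂,a₃][a₄,a₅] ≡ sgn(σ)·[a_{σ(1)},a_{σ(2)},a_{σ(3)}][a_{σ(4)},a_{σ(5)}] modulo the ideal T⁽⁴⁾. -/
import Mathlib

noncomputable section

/-- `ℤ⟨X⟩`, the free unital associative ring on a countable set `X = {x₀, x₁, …}`. -/
abbrev R : Type := FreeAlgebra ℤ ℕ

/-- The commutator `[a,b] = ab - ba`. -/
def br (a b : R) : R := a * b - b * a

/-- `T⁽⁴⁾`: the two-sided ideal generated by all left-normed commutators of length 4. -/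
def T4 : TwoSidedIdeal R := TwoSidedIdeal.span {y | ∃ a b c d : R, y = br (br (br a b) c) d}

lemma gen_mem (a b c d : R) : br (br (br a b) c) d ∈ T4 :=
  TwoSidedIdeal.subset_span ⟨a, b, c, d, rfl⟩

lemma star_mem (a b c c' d : R) :
    br (br a b) c * br c' d + br c d * br (br a b) c' ∈ T4 := by
  have h1 := gen_mem a b (c * c') d
  have h2 := T4.mul_mem_right _ c' (gen_mem a b c d)
  have h3 := T4.mul_mem_left c _ (gen_mem a b c' d)
  have key : br (br a b) c * br c' d + br c d * br (br a b) c'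
      = br (br (br a b) (c * c')) d - br (br (br a b) c) d * c' - c * br (br (br a b) c') d := by
    simp only [br]; noncomm_ring
  rw [key]
  exact sub_mem (sub_mem h1 h2) h3

lemma R4_mem (a a' b c d : R) :
    br a d * br (br a' b) c + br (br a c) d * br a' b + br a c * br (br a' b) d
      + br (br a b) d * br a' c + br a b * br (br a' c) d + br (br a b) c * br a' d ∈ T4 := by
  have h1 := gen_mem (a * a') b c d
  have h2 := T4.mul_mem_left a _ (gen_mem a' b c d)
  have h3 := T4.mul_mem_right _ a' (gen_mem a b c d)
  have key : br a d * br (br a' b) c + br (br a c) d * br a' b + br a c * br (br a' b) d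
      + br (br a b) d * br a' c + br a b * br (br a' c) d + br (br a b) c * br a' d
      = br (br (br (a * a') b) c) d - a * br (br (br a' b) c) d - br (br (br a b) c) d * a' := by
    simp only [br]; noncomm_ring
  rw [key]
  exact sub_mem (sub_mem h1 h2) h3

lemma core23 (a b c d e : R) :
    br (br a b) c * br d e + br (br a c) b * br d e ∈ T4 := by
  have h1 := R4_mem e b d a c
  have h2 := R4_mem e c d a b
  have s0 := star_mem a b c d e
  have s1 := star_mem a b c e d
  have s2 := star_mem a b d c e
  have s3 := star_mem a b d e c
  have s4 := star_mem a b e c d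
  have s5 := star_mem a c b d e
  have s6 := star_mem a c b e d
  have s7 := star_mem a c d b e
  have s8 := star_mem a c d e b
  have s9 := star_mem a c e b d
  have s10 := star_mem a d b c e
  have s11 := star_mem a d b e c
  have s12 := star_mem a d c b e
  have s13 := star_mem a d c e b
  have s14 := star_mem a e b c d
  have s15 := star_mem a e b d c
  have s16 := star_mem a e c b d
  have s17 := star_mem a e c d b
  have s18 := star_mem b d a c e
  have s19 := star_mem b d a e c
  have s20 := star_mem b d e a c
  have s21 := star_mem b e a d c
  have s22 := star_mem b e d a c
  have s23 := star_mem c d a b e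
  have s24 := star_mem c d a e b
  have s25 := star_mem c d e a b
  have s26 := star_mem c e a d b
  have s27 := star_mem c e d a b
  have s28 := star_mem d e a b c
  have s29 := star_mem d e a c b
  have key : br (br a b) c * br d e + br (br a c) b * br d e
      = (br e c * br (br b d) a + br (br e a) c * br b d + br e a * br (br b d) c + br (br e d) c * br b a + br e d * br (br b a) c + br (br e d) a * br b c)
      + (br e b * br (br c d) a + br (br e a) b * br c d + br e a * br (br c d) b + br (br e d) b * br c a + br e d * br (br c a) b + br (br e d) a * br c b)
      + (-2 : ℤ) • (br (br a b) c * br d e + br c e * br (br a b) d)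
      + (-3 : ℤ) • (br (br a b) c * br e d + br c d * br (br a b) e)
      + (-2 : ℤ) • (br (br a b) d * br c e + br d e * br (br a b) c)
      + (-4 : ℤ) • (br (br a b) d * br e c + br d c * br (br a b) e)
      + (-1 : ℤ) • (br (br a b) e * br c d + br e d * br (br a b) c)
      + (-2 : ℤ) • (br (br a c) b * br d e + br b e * br (br a c) d)
      + (-3 : ℤ) • (br (br a c) b * br e d + br b d * br (br a c) e)
      + (-2 : ℤ) • (br (br a c) d * br b e + br d e * br (br a c) b)
      + (-4 : ℤ) • (br (br a c) d * br e b + br d b * br (br a c) e)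
      + (-1 : ℤ) • (br (br a c) e * br b d + br e d * br (br a c) b)
      + (2 : ℤ) • (br (br a d) b * br c e + br b e * br (br a d) c)
      + (4 : ℤ) • (br (br a d) b * br e c + br b c * br (br a d) e)
      + (2 : ℤ) • (br (br a d) c * br b e + br c e * br (br a d) b)
      + (4 : ℤ) • (br (br a d) c * br e b + br c b * br (br a d) e)
      + (-1 : ℤ) • (br (br a e) b * br c d + br b d * br (br a e) c)
      + (-3 : ℤ) • (br (br a e) b * br d c + br b c * br (br a e) d)
      + (-1 : ℤ) • (br (br a e) c * br b d + br c d * br (br a e) b)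
      + (-3 : ℤ) • (br (br a e) c * br d b + br c b * br (br a e) d)
      + (1 : ℤ) • (br (br b d) a * br c e + br a e * br (br b d) c)
      + (-1 : ℤ) • (br (br b d) a * br e c + br a c * br (br b d) e)
      + (1 : ℤ) • (br (br b d) e * br a c + br e c * br (br b d) a)
      + (1 : ℤ) • (br (br b e) a * br d c + br a c * br (br b e) d)
      + (-1 : ℤ) • (br (br b e) d * br a c + br d c * br (br b e) a)
      + (1 : ℤ) • (br (br c d) a * br b e + br a e * br (br c d) b)
      + (-1 : ℤ) • (br (br c d) a * br e b + br a b * br (br c d) e)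
      + (1 : ℤ) • (br (br c d) e * br a b + br e b * br (br c d) a)
      + (1 : ℤ) • (br (br c e) a * br d b + br a b * br (br c e) d)
      + (-1 : ℤ) • (br (br c e) d * br a b + br d b * br (br c e) a)
      + (-1 : ℤ) • (br (br d e) a * br b c + br a c * br (br d e) b)
      + (-1 : ℤ) • (br (br d e) a * br c b + br a b * br (br d e) c) := by
    simp only [br]; push_cast [zsmul_eq_mul]; noncomm_ring
  rw [key]
  exact add_mem (add_mem (add_mem (add_mem (add_mem (add_mem (add_mem (add_mem (add_mem (add_mem (add_mem (add_mem (add_mem (add_mem (add_mem (add_mem (add_mem (add_mem (add_mem (add_mem (add_mem (add_mem (add_mem (add_mem (add_mem (add_mem (add_mem (add_mem (add_mem (add_mem (add_mem h1 h2) (zsmul_mem s0 _)) (zsmul_mem s1 _)) (zsmul_mem s2 _)) (zsmul_mem s3 _)) (zsmul_mem s4 _)) (zsmul_mem s5 _)) (zsmul_mem s6 _)) (zsmul_mem s7 _)) (zsmul_mem s8 _)) (zsmul_mem s9 _)) (zsmul_mem s10 _)) (zsmul_mem s11 _)) (zsmul_mem s12 _)) (zsmul_mem s13 _)) (zsmul_mem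 s14 _)) (zsmul_mem s15 _)) (zsmul_mem s16 _)) (zsmul_mem s17 _)) (zsmul_mem s18 _)) (zsmul_mem s19 _)) (zsmul_mem s20 _)) (zsmul_mem s21 _)) (zsmul_mem s22 _)) (zsmul_mem s23 _)) (zsmul_mem s24 _)) (zsmul_mem s25 _)) (zsmul_mem s26 _)) (zsmul_mem s27 _)) (zsmul_mem s28 _)) (zsmul_mem s29 _)

lemma core12 (a b c d e : R) :
    br (br a b) c * br d e + br (br b a) c * br d e ∈ T4 := by
  have key : br (br a b) c * br d e + br (br b a) c * br d e = 0 := by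
    simp only [br]; noncomm_ring
  rw [key]; exact zero_mem _

lemma core45 (a b c d e : R) :
    br (br a b) c * br d e + br (br a b) c * br e d ∈ T4 := by
  have key : br (br a b) c * br d e + br (br a b) c * br e d = 0 := by
    simp only [br]; noncomm_ring
  rw [key]; exact zero_mem _

lemma core34 (a b c d e : R) :
    br (br a b) c * br d e + br (br a b) d * br c e ∈ T4 := by
  have h1 := star_mem a b c d e
  have h2 := gen_mem a b d (br c e)
  have key : br (br a b) c * br d e + br (br a b) d * br c e
      = (br (br a b) c * br d e + br c e * br (br a b) d) + br (br (br a b) d) (br c e) := by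
    simp only [br]; noncomm_ring
  rw [key]; exact add_mem h1 h2

/-- the product `[a₀,a₁,a₂][a₃,a₄]`. -/
def F (a : Fin 5 → R) : R := br (br (a 0) (a 1)) (a 2) * br (a 3) (a 4)

def P (s : Equiv.Perm (Fin 5)) : Prop := ∀ a : Fin 5 → R, F a + F (a ∘ s) ∈ T4

lemma P_conj {s t : Equiv.Perm (Fin 5)} (hs : P s) (ht : P t) : P (t * s * t) := by
  intro a
  have h1 := ht a
  have h2 := hs (a ∘ t)
  have h3 := ht ((a ∘ t) ∘ s)
  have hc : a ∘ ⇑(t * s * t) = ((a ∘ t) ∘ s) ∘ t := rfl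
  have key : F a + F (((a ∘ t) ∘ s) ∘ t)
      = (F a + F (a ∘ t)) - (F (a ∘ t) + F ((a ∘ t) ∘ s)) + (F ((a ∘ t) ∘ s) + F (((a ∘ t) ∘ s) ∘ t)) := by
    abel
  rw [hc, key]
  exact add_mem (sub_mem h1 h2) h3

lemma P01 : P (Equiv.swap (0 : Fin 5) 1) := by
  intro a
  have v0 : Equiv.swap (0 : Fin 5) 1 0 = 1 := by decide
  have v1 : Equiv.swap (0 : Fin 5) 1 1 = 0 := by decide
  have v2 : Equiv.swap (0 : Fin 5) 1 2 = 2 := by decide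
  have v3 : Equiv.swap (0 : Fin 5) 1 3 = 3 := by decide
  have v4 : Equiv.swap (0 : Fin 5) 1 4 = 4 := by decide
  show F a + F (a ∘ (Equiv.swap (0 : Fin 5) 1)) ∈ T4
  simp only [F, Function.comp_apply, v0, v1, v2, v3, v4]
  exact core12 (a 0) (a 1) (a 2) (a 3) (a 4)

lemma P12 : P (Equiv.swap (1 : Fin 5) 2) := by
  intro a
  have v0 : Equiv.swap (1 : Fin 5) 2 0 = 0 := by decide
  have v1 : Equiv.swap (1 : Fin 5) 2 1 = 2 := by decide
  have v2 : Equiv.swap (1 : Fin 5) 2 2 = 1 := by decide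
  have v3 : Equiv.swap (1 : Fin 5) 2 3 = 3 := by decide
  have v4 : Equiv.swap (1 : Fin 5) 2 4 = 4 := by decide
  show F a + F (a ∘ (Equiv.swap (1 : Fin 5) 2)) ∈ T4
  simp only [F, Function.comp_apply, v0, v1, v2, v3, v4]
  exact core23 (a 0) (a 1) (a 2) (a 3) (a 4)

lemma P23 : P (Equiv.swap (2 : Fin 5) 3) := by
  intro a
  have v0 : Equiv.swap (2 : Fin 5) 3 0 = 0 := by decide
  have v1 : Equiv.swap (2 : Fin 5) 3 1 = 1 := by decide
  have v2 : Equiv.swap (2 : Fin 5) 3 2 = 3 := by decide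
  have v3 : Equiv.swap (2 : Fin 5) 3 3 = 2 := by decide
  have v4 : Equiv.swap (2 : Fin 5) 3 4 = 4 := by decide
  show F a + F (a ∘ (Equiv.swap (2 : Fin 5) 3)) ∈ T4
  simp only [F, Function.comp_apply, v0, v1, v2, v3, v4]
  exact core34 (a 0) (a 1) (a 2) (a 3) (a 4)

lemma P34 : P (Equiv.swap (3 : Fin 5) 4) := by
  intro a
  have v0 : Equiv.swap (3 : Fin 5) 4 0 = 0 := by decide
  have v1 : Equiv.swap (3 : Fin 5) 4 1 = 1 := by decide
  have v2 : Equiv.swap (3 : Fin 5) 4 2 = 2 := by decide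
  have v3 : Equiv.swap (3 : Fin 5) 4 3 = 4 := by decide
  have v4 : Equiv.swap (3 : Fin 5) 4 4 = 3 := by decide
  show F a + F (a ∘ (Equiv.swap (3 : Fin 5) 4)) ∈ T4
  simp only [F, Function.comp_apply, v0, v1, v2, v3, v4]
  exact core45 (a 0) (a 1) (a 2) (a 3) (a 4)

lemma P02 : P (Equiv.swap (0 : Fin 5) 2) := by
  have h : Equiv.swap (0 : Fin 5) 2 = Equiv.swap 0 1 * Equiv.swap 1 2 * Equiv.swap 0 1 := by decide
  rw [h]; exact P_conj P12 P01

lemma P13 : P (Equiv.swap (1 : Fin 5) 3) := by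
  have h : Equiv.swap (1 : Fin 5) 3 = Equiv.swap 1 2 * Equiv.swap 2 3 * Equiv.swap 1 2 := by decide
  rw [h]; exact P_conj P23 P12

lemma P24 : P (Equiv.swap (2 : Fin 5) 4) := by
  have h : Equiv.swap (2 : Fin 5) 4 = Equiv.swap 2 3 * Equiv.swap 3 4 * Equiv.swap 2 3 := by decide
  rw [h]; exact P_conj P34 P23

lemma P03 : P (Equiv.swap (0 : Fin 5) 3) := by
  have h : Equiv.swap (0 : Fin 5) 3 = Equiv.swap 0 1 * Equiv.swap 1 3 * Equiv.swap 0 1 := by decide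
  rw [h]; exact P_conj P13 P01

lemma P14 : P (Equiv.swap (1 : Fin 5) 4) := by
  have h : Equiv.swap (1 : Fin 5) 4 = Equiv.swap 1 2 * Equiv.swap 2 4 * Equiv.swap 1 2 := by decide
  rw [h]; exact P_conj P24 P12

lemma P04 : P (Equiv.swap (0 : Fin 5) 4) := by
  have h : Equiv.swap (0 : Fin 5) 4 = Equiv.swap 0 1 * Equiv.swap 1 4 * Equiv.swap 0 1 := by decide
  rw [h]; exact P_conj P14 P01

lemma Pswap (x y : Fin 5) (hxy : x ≠ y) : P (Equiv.swap x y) := by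
  fin_cases x <;> fin_cases y <;>
    first
      | (exfalso; exact hxy rfl)
      | exact P01 | exact P02 | exact P03 | exact P04 | exact P12 | exact P13
      | exact P14 | exact P23 | exact P24 | exact P34

lemma aux (σ : Equiv.Perm (Fin 5)) :
    ∀ a : Fin 5 → R, F a - (Equiv.Perm.sign σ : ℤ) • F (a ∘ σ) ∈ T4 := by
  refine Equiv.Perm.swap_induction_on σ ?_ ?_
  · intro a
    have : F a - (Equiv.Perm.sign (1 : Equiv.Perm (Fin 5)) : ℤ) • F (a ∘ ⇑(1 : Equiv.Perm (Fin 5))) = 0 := by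
      have hc : a ∘ ⇑(1 : Equiv.Perm (Fin 5)) = a := rfl
      rw [hc, Equiv.Perm.sign_one]; simp
    rw [this]; exact zero_mem _
  · intro f x y hxy ih a
    have h1 := Pswap x y hxy a
    have h2 := ih (a ∘ Equiv.swap x y)
    have hs : ((Equiv.Perm.sign (Equiv.swap x y * f) : ℤˣ) : ℤ)
        = -((Equiv.Perm.sign f : ℤˣ) : ℤ) := by
      rw [Equiv.Perm.sign_mul, Equiv.Perm.sign_swap hxy]; push_cast; ring
    have hc : a ∘ ⇑(Equiv.swap x y * f) = (a ∘ Equiv.swap x y) ∘ f := rfl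
    rw [hc, hs, neg_smul, sub_neg_eq_add]
    have key : F a + (Equiv.Perm.sign f : ℤ) • F ((a ∘ Equiv.swap x y) ∘ f)
        = (F a + F (a ∘ Equiv.swap x y))
        - (F (a ∘ Equiv.swap x y) - (Equiv.Perm.sign f : ℤ) • F ((a ∘ Equiv.swap x y) ∘ f)) := by
      abel
    rw [key]
    exact sub_mem h1 h2

theorem stmt2 (σ : Equiv.Perm (Fin 5)) (a : Fin 5 → R) :
    br (br (a 0) (a 1)) (a 2) * br (a 3) (a 4)
      - (Equiv.Perm.sign σ : ℤ) •
          (br (br (a (σ 0)) (a (σ 1))) (a (σ 2)) * br (a (σ 3)) (a (σ 4))) ∈ T4 := by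
  exact aux σ a
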